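/- (Detour insertion bound.) In a metric space, let l be a route covering item set N_l with cost c_l, and for u ∉ N_l define c_{ul} = 2·min_{v ∈ N_l ∪ {depot}} c(u,v). Then for any subset N̂ ⊆ N_l ∪ M where M is a set of items not on l, there exists a route covering exactly N̂ of cost at most c_l + Σ_{u ∈ N̂ ∩ M} c_{ul}. -/

import Mathlib

open Finset List

/-- Length of a route given as a finite sequence of points: sum of distances
between consecutive points. -/
def tourLength {X : Type*} [MetricSpace X] : List X → ℝ
  | [] => 0
  | [_] => 0
  | x :: y :: rest => dist x y + tourLength (y :: rest)

namespace Stmt14Aux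

variable {X : Type*} [MetricSpace X]

lemma tourLength_nonneg : ∀ l : List X, 0 ≤ tourLength l
  | [] => le_refl 0
  | [_] => le_refl 0
  | _ :: y :: rest => add_nonneg dist_nonneg (tourLength_nonneg (y :: rest))

lemma tourLength_cons_cons (x y : X) (rest : List X) :
    tourLength (x :: y :: rest) = dist x y + tourLength (y :: rest) := rfl

lemma tourLength_cons_le (u x : X) : ∀ s : List X,
    tourLength (u :: s) ≤ dist u x + tourLength (x :: s)
  | [] => by
      have h1 : tourLength [u] = 0 := rfl
      have h2 : tourLength [x] = 0 := rfl
      rw [h1, h2]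
      simpa using dist_nonneg
  | a :: s' => by
      rw [tourLength_cons_cons, tourLength_cons_cons]
      have := dist_triangle u x a
      linarith

lemma tourLength_le_of_sublist {s t : List X} (h : s <+ t) :
    ∀ x, tourLength (x :: s) ≤ tourLength (x :: t) := by
  induction h with
  | slnil => intro x; exact le_refl _
  | cons a h ih =>
      intro x
      rename_i s' t'
      refine (ih x).trans ?_
      cases t' with
      | nil =>
          have h1 : tourLength [x] = 0 := rfl
          have h2 : tourLength [x, a] = dist x a + 0 := rfl
          rw [h1, h2]
          have := dist_nonneg (x := x) (y := a)
          linarith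
      | cons b t'' =>
          rw [tourLength_cons_cons, tourLength_cons_cons x a,
            tourLength_cons_cons a b]
          have := dist_triangle x a b
          linarith
  | cons_cons a h ih =>
      intro x
      rw [tourLength_cons_cons, tourLength_cons_cons]
      exact add_le_add_right (ih a) _

lemma insert_detour (u z : X) : ∀ (t : List X) (x v : X), v ∈ x :: t →
    ∃ t' : List X, t'.Perm (u :: t) ∧
      tourLength (x :: t' ++ [z]) ≤ tourLength (x :: t ++ [z]) + 2 * dist u v := by
  intro t
  induction t with
  | nil =>
      intro x v hv
      rw [List.mem_singleton] at hv
      subst hv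
      refine ⟨[u], .refl _, ?_⟩
      have h := tourLength_cons_le u v [z]
      have h2 : tourLength (v :: [u] ++ [z]) = dist v u + tourLength (u :: [z]) := rfl
      rw [h2, dist_comm v u]
      simpa using by linarith
  | cons a t ih =>
      intro x v hv
      rcases List.mem_cons.mp hv with h | h
      · subst h
        refine ⟨u :: a :: t, .refl _, ?_⟩
        have h1 := tourLength_cons_le u v (a :: t ++ [z])
        have h2 : tourLength (v :: (u :: a :: t) ++ [z])
            = dist v u + tourLength (u :: (a :: t ++ [z])) := rfl
        have h3 : tourLength (v :: (a :: t) ++ [z])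
            = tourLength (v :: (a :: t ++ [z])) := rfl
        rw [h2, dist_comm v u, h3]
        linarith
      · obtain ⟨t', hp, hb⟩ := ih a v h
        refine ⟨a :: t', (hp.cons a).trans (List.Perm.swap u a t), ?_⟩
        have h2 : tourLength (x :: (a :: t') ++ [z])
            = dist x a + tourLength (a :: t' ++ [z]) := rfl
        have h3 : tourLength (x :: (a :: t) ++ [z])
            = dist x a + tourLength (a :: t ++ [z]) := rfl
        rw [h2, h3]
        linarith

lemma main_insert [DecidableEq X] (x0 : X) (l : List X) (cul : X → ℝ)
    (hcul : ∀ u, cul u = 2 * (insert x0 l.toFinset).inf'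
      (Finset.insert_nonempty _ _) (fun v => dist u v)) :
    ∀ S : Finset X, ∃ L : List X, L.Perm (S.toList ++ l) ∧
      tourLength (x0 :: L ++ [x0]) ≤ tourLength (x0 :: l ++ [x0]) + ∑ u ∈ S, cul u := by
  intro S
  induction S using Finset.induction with
  | empty => exact ⟨l, by simp, by simp⟩
  | @insert a S ha ih =>
      obtain ⟨L, hp, hb⟩ := ih
      obtain ⟨v, hv, hvd⟩ := Finset.exists_mem_eq_inf'
        (Finset.insert_nonempty x0 l.toFinset) (fun w => dist a w)
      have hvmem : v ∈ x0 :: L := by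
        rcases Finset.mem_insert.mp hv with h | h
        · exact h ▸ List.mem_cons_self
        · exact List.mem_cons_of_mem _ ((hp.mem_iff).mpr
            (List.mem_append_right _ (List.mem_toFinset.mp h)))
      obtain ⟨L', hp', hb'⟩ := insert_detour a x0 L x0 v hvmem
      refine ⟨L', ?_, ?_⟩
      · refine (hp'.trans (hp.cons a)).trans ?_
        exact ((Finset.toList_insert ha).symm.append_right l)
      · rw [Finset.sum_insert ha]
        have : cul a = 2 * dist a v := by rw [hcul a, hvd]
        linarith

end Stmt14Aux

/-- Detour insertion bound: given a route `l` (from the depot `x0` back to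
`x0`) covering item set `N_l`, a set `M` of items not on `l`, and the detour
costs `c_{ul} = 2·min_{v ∈ N_l ∪ {depot}} c(u,v)`, for any `N̂ ⊆ N_l ∪ M`
there exists a route covering exactly `N̂` of cost at most
`c_l + Σ_{u ∈ N̂ ∩ M} c_{ul}`. -/
theorem stmt14 {X : Type*} [MetricSpace X] [DecidableEq X] (x0 : X)
    (l : List X) (hnd : l.Nodup) (M : Finset X)
    (hdisj : ∀ u ∈ M, u ∉ l.toFinset)
    (cul : X → ℝ)
    (hcul : ∀ u, cul u = 2 * (insert x0 l.toFinset).inf'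
      (Finset.insert_nonempty _ _) (fun v => dist u v))
    (Nhat : Finset X) (hsub : Nhat ⊆ l.toFinset ∪ M) :
    ∃ l' : List X, l'.Nodup ∧ l'.toFinset = Nhat ∧
      tourLength (x0 :: l' ++ [x0]) ≤
        tourLength (x0 :: l ++ [x0]) + ∑ u ∈ Nhat ∩ M, cul u := by
  classical
  obtain ⟨L, hp, hb⟩ := Stmt14Aux.main_insert x0 l cul hcul (Nhat ∩ M)
  have hLnd : L.Nodup := by
    refine (hp.nodup_iff).mpr ?_
    rw [List.nodup_append]
    refine ⟨Finset.nodup_toList _, hnd, ?_⟩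
    intro a haS b hal hab
    subst hab
    have haM : a ∈ M := (Finset.mem_inter.mp (Finset.mem_toList.mp haS)).2
    exact hdisj a haM (List.mem_toFinset.mpr hal)
  refine ⟨L.filter (fun x => x ∈ Nhat), hLnd.filter _, ?_, ?_⟩
  · ext x
    simp only [List.mem_toFinset, List.mem_filter, decide_eq_true_eq]
    constructor
    · exact fun h => h.2
    · intro hx
      refine ⟨?_, hx⟩
      rcases Finset.mem_union.mp (hsub hx) with h | h
      · exact (hp.mem_iff).mpr (List.mem_append_right _ (List.mem_toFinset.mp h))
      · exact (hp.mem_iff).mpr (List.mem_append_left _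
          (Finset.mem_toList.mpr (Finset.mem_inter.mpr ⟨hx, h⟩)))
  · have hsl : (L.filter (fun x => x ∈ Nhat) ++ [x0]) <+ (L ++ [x0]) :=
      (L.filter_sublist).append (List.Sublist.refl _)
    exact (Stmt14Aux.tourLength_le_of_sublist hsl x0).trans hb
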